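/- Let v₁ = (p₁,q₁), v₂ = (p₂,q₂) ∈ ℕ² be linearly independent, and let a, b, ν ∈ ℕ with ν ≥ 1. Set N₁ = p₁a + q₁b and N₂ = p₂a + q₂b, and suppose N₁ ≥ 1 and N₂ ≥ 1. Then in ℚ[[u,T]], ∑_{(k₁,k₂) ∈ int(Δ) ∩ ℤ²} u^{ν k₁ + k₂} T^{k₁ a + k₂ b} = D_Δ / ((1 - u^{p₁ν+q₁} T^{N₁})(1 - u^{p₂ν+q₂} T^{N₂})), where Δ is the cone generated by v₁, v₂, D_Δ = ∑_{(i,j) ∈ P_Δ} u^{νi+j} T^{ia+jb}, and P_Δ is the fundamental domain {μ₁v₁ + μ₂v₂ : 0 < μ₁ ≤ 1, 0 < μ₂ ≤ 1, μᵢ ∈ ℚ} ∩ ℤ². -/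

import Mathlib

open MvPowerSeries Finsupp

section Stmt6Aux

variable {p₁ q₁ p₂ q₂ : ℕ}

/-- determinant -/
private def dd (p₁ q₁ p₂ q₂ : ℕ) : ℚ := (p₁ : ℚ) * q₂ - (p₂ : ℚ) * q₁

private noncomputable def mm₁ (p₁ q₁ p₂ q₂ : ℕ) (k : ℕ × ℕ) : ℚ :=
  ((q₂ : ℚ) * k.1 - (p₂ : ℚ) * k.2) / dd p₁ q₁ p₂ q₂

private noncomputable def mm₂ (p₁ q₁ p₂ q₂ : ℕ) (k : ℕ × ℕ) : ℚ :=
  ((p₁ : ℚ) * k.2 - (q₁ : ℚ) * k.1) / dd p₁ q₁ p₂ q₂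

private lemma dd_ne (h : p₁ * q₂ ≠ p₂ * q₁) : dd p₁ q₁ p₂ q₂ ≠ 0 := by
  unfold dd
  intro hc
  apply h
  have : ((p₁ * q₂ : ℕ) : ℚ) = ((p₂ * q₁ : ℕ) : ℚ) := by push_cast; linarith
  exact_mod_cast this

private lemma repr₁ (h : p₁ * q₂ ≠ p₂ * q₁) (k : ℕ × ℕ) :
    (k.1 : ℚ) = mm₁ p₁ q₁ p₂ q₂ k * p₁ + mm₂ p₁ q₁ p₂ q₂ k * p₂ := by
  have hd := dd_ne h
  unfold mm₁ mm₂ dd at *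
  rw [div_mul_eq_mul_div, div_mul_eq_mul_div, ← add_div, eq_div_iff hd]
  ring

private lemma repr₂ (h : p₁ * q₂ ≠ p₂ * q₁) (k : ℕ × ℕ) :
    (k.2 : ℚ) = mm₁ p₁ q₁ p₂ q₂ k * q₁ + mm₂ p₁ q₁ p₂ q₂ k * q₂ := by
  have hd := dd_ne h
  unfold mm₁ mm₂ dd at *
  rw [div_mul_eq_mul_div, div_mul_eq_mul_div, ← add_div, eq_div_iff hd]
  ring

private lemma uniq (h : p₁ * q₂ ≠ p₂ * q₁) {k : ℕ × ℕ} {μ₁ μ₂ : ℚ}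
    (h1 : (k.1 : ℚ) = μ₁ * p₁ + μ₂ * p₂) (h2 : (k.2 : ℚ) = μ₁ * q₁ + μ₂ * q₂) :
    μ₁ = mm₁ p₁ q₁ p₂ q₂ k ∧ μ₂ = mm₂ p₁ q₁ p₂ q₂ k := by
  have hd := dd_ne h
  constructor
  · unfold mm₁
    rw [eq_div_iff hd]
    unfold dd
    linear_combination (p₂ : ℚ) * h2 - (q₂ : ℚ) * h1
  · unfold mm₂
    rw [eq_div_iff hd]
    unfold dd
    linear_combination (q₁ : ℚ) * h1 - (p₁ : ℚ) * h2

/-- the interior-existence condition is equivalent to positivity of the coordinates -/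
private lemma int_iff (h : p₁ * q₂ ≠ p₂ * q₁) (k : ℕ × ℕ) :
    (∃ μ₁ μ₂ : ℚ, 0 < μ₁ ∧ 0 < μ₂ ∧
        (k.1 : ℚ) = μ₁ * p₁ + μ₂ * p₂ ∧ (k.2 : ℚ) = μ₁ * q₁ + μ₂ * q₂) ↔
      (0 < mm₁ p₁ q₁ p₂ q₂ k ∧ 0 < mm₂ p₁ q₁ p₂ q₂ k) := by
  constructor
  · rintro ⟨μ₁, μ₂, hμ₁, hμ₂, h1, h2⟩
    obtain ⟨e1, e2⟩ := uniq h h1 h2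
    exact ⟨e1 ▸ hμ₁, e2 ▸ hμ₂⟩
  · rintro ⟨h1, h2⟩
    exact ⟨_, _, h1, h2, repr₁ h k, repr₂ h k⟩

private lemma fund_iff (h : p₁ * q₂ ≠ p₂ * q₁) (k : ℕ × ℕ) :
    (∃ μ₁ μ₂ : ℚ, 0 < μ₁ ∧ μ₁ ≤ 1 ∧ 0 < μ₂ ∧ μ₂ ≤ 1 ∧
        (k.1 : ℚ) = μ₁ * p₁ + μ₂ * p₂ ∧ (k.2 : ℚ) = μ₁ * q₁ + μ₂ * q₂) ↔
      ((0 < mm₁ p₁ q₁ p₂ q₂ k ∧ mm₁ p₁ q₁ p₂ q₂ k ≤ 1) ∧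
        (0 < mm₂ p₁ q₁ p₂ q₂ k ∧ mm₂ p₁ q₁ p₂ q₂ k ≤ 1)) := by
  constructor
  · rintro ⟨μ₁, μ₂, hμ₁, hμ₁', hμ₂, hμ₂', h1, h2⟩
    obtain ⟨e1, e2⟩ := uniq h h1 h2
    exact ⟨⟨e1 ▸ hμ₁, e1 ▸ hμ₁'⟩, ⟨e2 ▸ hμ₂, e2 ▸ hμ₂'⟩⟩
  · rintro ⟨⟨h1, h1'⟩, h2, h2'⟩
    exact ⟨_, _, h1, h1', h2, h2', repr₁ h k, repr₂ h k⟩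

/-- linearity of mm₁, mm₂ under a shift by a vector with coordinates (c₁, c₂). -/
private lemma mm₁_shift (h : p₁ * q₂ ≠ p₂ * q₁) {P Q : ℕ} {c₁ c₂ : ℚ}
    (hP : (P : ℚ) = c₁ * p₁ + c₂ * p₂) (hQ : (Q : ℚ) = c₁ * q₁ + c₂ * q₂) (k : ℕ × ℕ) :
    mm₁ p₁ q₁ p₂ q₂ (k.1 + P, k.2 + Q) = mm₁ p₁ q₁ p₂ q₂ k + c₁ := by
  have hd := dd_ne h
  unfold mm₁ dd at *
  rw [div_add' _ _ _ hd, div_eq_div_iff hd hd]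
  push_cast
  linear_combination (((p₁:ℚ) * q₂ - (p₂:ℚ) * q₁) * ((q₂:ℚ) * hP - (p₂:ℚ) * hQ))

private lemma mm₂_shift (h : p₁ * q₂ ≠ p₂ * q₁) {P Q : ℕ} {c₁ c₂ : ℚ}
    (hP : (P : ℚ) = c₁ * p₁ + c₂ * p₂) (hQ : (Q : ℚ) = c₁ * q₁ + c₂ * q₂) (k : ℕ × ℕ) :
    mm₂ p₁ q₁ p₂ q₂ (k.1 + P, k.2 + Q) = mm₂ p₁ q₁ p₂ q₂ k + c₂ := by
  have hd := dd_ne h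
  unfold mm₂ dd at *
  rw [div_add' _ _ _ hd, div_eq_div_iff hd hd]
  push_cast
  linear_combination (((p₁:ℚ) * q₂ - (p₂:ℚ) * q₁) * ((p₁:ℚ) * hQ - (q₁:ℚ) * hP))

/-- the key shift/bijection lemma -/
private lemma shift_ncard (h : p₁ * q₂ ≠ p₂ * q₁) (a b ν : ℕ)
    {P Q : ℕ} {c₁ c₂ : ℚ} (hc₁ : 0 ≤ c₁) (hc₂ : 0 ≤ c₂)
    (hP : (P : ℚ) = c₁ * p₁ + c₂ * p₂) (hQ : (Q : ℚ) = c₁ * q₁ + c₂ * q₂)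
    (A B : ℕ) :
    ({k : ℕ × ℕ | (c₁ < mm₁ p₁ q₁ p₂ q₂ k ∧ c₂ < mm₂ p₁ q₁ p₂ q₂ k) ∧
        ν * k.1 + k.2 = A ∧ k.1 * a + k.2 * b = B} : Set (ℕ × ℕ)).ncard =
      if ν * P + Q ≤ A ∧ P * a + Q * b ≤ B then
        ({k : ℕ × ℕ | (0 < mm₁ p₁ q₁ p₂ q₂ k ∧ 0 < mm₂ p₁ q₁ p₂ q₂ k) ∧
          ν * k.1 + k.2 = A - (ν * P + Q) ∧ k.1 * a + k.2 * b = B - (P * a + Q * b)} :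
            Set (ℕ × ℕ)).ncard
      else 0 := by
  -- every element of the left set dominates (P, Q)
  have hdom : ∀ k : ℕ × ℕ,
      (c₁ < mm₁ p₁ q₁ p₂ q₂ k ∧ c₂ < mm₂ p₁ q₁ p₂ q₂ k) → P ≤ k.1 ∧ Q ≤ k.2 := by
    rintro k ⟨h1, h2⟩
    have r1 := repr₁ h k
    have r2 := repr₂ h k
    have hp1 : (0:ℚ) ≤ p₁ := Nat.cast_nonneg _
    have hp2 : (0:ℚ) ≤ p₂ := Nat.cast_nonneg _
    have hq1 : (0:ℚ) ≤ q₁ := Nat.cast_nonneg _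
    have hq2 : (0:ℚ) ≤ q₂ := Nat.cast_nonneg _
    constructor
    · have : (P : ℚ) ≤ (k.1 : ℚ) := by
        rw [hP, r1]
        have := mul_le_mul_of_nonneg_right h1.le hp1
        have := mul_le_mul_of_nonneg_right h2.le hp2
        linarith
      exact_mod_cast this
    · have : (Q : ℚ) ≤ (k.2 : ℚ) := by
        rw [hQ, r2]
        have := mul_le_mul_of_nonneg_right h1.le hq1
        have := mul_le_mul_of_nonneg_right h2.le hq2
        linarith
      exact_mod_cast this
  by_cases hcond : ν * P + Q ≤ A ∧ P * a + Q * b ≤ B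
  · rw [if_pos hcond]
    have hinj : Function.Injective (fun k : ℕ × ℕ => (k.1 + P, k.2 + Q)) := by
      intro x y hxy
      simp only [Prod.mk.injEq] at hxy
      ext <;> omega
    have himg : (fun k : ℕ × ℕ => (k.1 + P, k.2 + Q)) ''
        {k : ℕ × ℕ | (0 < mm₁ p₁ q₁ p₂ q₂ k ∧ 0 < mm₂ p₁ q₁ p₂ q₂ k) ∧
          ν * k.1 + k.2 = A - (ν * P + Q) ∧ k.1 * a + k.2 * b = B - (P * a + Q * b)} =
        {k : ℕ × ℕ | (c₁ < mm₁ p₁ q₁ p₂ q₂ k ∧ c₂ < mm₂ p₁ q₁ p₂ q₂ k) ∧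
          ν * k.1 + k.2 = A ∧ k.1 * a + k.2 * b = B} := by
      ext k
      simp only [Set.mem_image, Set.mem_setOf_eq]
      constructor
      · rintro ⟨x, ⟨⟨hx1, hx2⟩, hE1, hE2⟩, rfl⟩
        refine ⟨⟨?_, ?_⟩, ?_, ?_⟩
        · rw [mm₁_shift h hP hQ]; linarith
        · rw [mm₂_shift h hP hQ]; linarith
        · simp only [Nat.mul_add, Nat.add_mul]
          have := hcond.1
          omega
        · simp only [Nat.mul_add, Nat.add_mul]
          have := hcond.2
          omega
      · rintro ⟨⟨h1, h2⟩, hE1, hE2⟩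
        obtain ⟨hk1, hk2⟩ := hdom k ⟨h1, h2⟩
        refine ⟨(k.1 - P, k.2 - Q), ⟨⟨?_, ?_⟩, ?_, ?_⟩, ?_⟩
        · have := mm₁_shift h hP hQ (k.1 - P, k.2 - Q)
          dsimp only at this
          rw [show k.1 - P + P = k.1 from by omega, show k.2 - Q + Q = k.2 from by omega,
            Prod.mk.eta] at this
          linarith
        · have := mm₂_shift h hP hQ (k.1 - P, k.2 - Q)
          dsimp only at this
          rw [show k.1 - P + P = k.1 from by omega, show k.2 - Q + Q = k.2 from by omega,
            Prod.mk.eta] at this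
          linarith
        · simp only
          have hm : ν * (k.1 - P) = ν * k.1 - ν * P := Nat.mul_sub ..
          have : ν * P ≤ ν * k.1 := Nat.mul_le_mul_left _ hk1
          omega
        · simp only
          have h3 : (k.1 - P) * a = k.1 * a - P * a := Nat.sub_mul ..
          have h4 : (k.2 - Q) * b = k.2 * b - Q * b := Nat.sub_mul ..
          have h5 : P * a ≤ k.1 * a := Nat.mul_le_mul_right _ hk1
          have h6 : Q * b ≤ k.2 * b := Nat.mul_le_mul_right _ hk2
          omega
        · show (k.1 - P + P, k.2 - Q + Q) = k
          have : k.1 - P + P = k.1 := by omega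
          have : k.2 - Q + Q = k.2 := by omega
          ext <;> simp <;> omega
    rw [← himg, Set.ncard_image_of_injective _ hinj]
  · rw [if_neg hcond]
    convert Set.ncard_empty (ℕ × ℕ)
    rw [Set.eq_empty_iff_forall_notMem]
    rintro k ⟨⟨h1, h2⟩, hE1, hE2⟩
    obtain ⟨hk1, hk2⟩ := hdom k ⟨h1, h2⟩
    apply hcond
    constructor
    · calc ν * P + Q ≤ ν * k.1 + k.2 := by
            have : ν * P ≤ ν * k.1 := Nat.mul_le_mul_left _ hk1
            omega
        _ = A := hE1
    · calc P * a + Q * b ≤ k.1 * a + k.2 * b := by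
            have : P * a ≤ k.1 * a := Nat.mul_le_mul_right _ hk1
            have : Q * b ≤ k.2 * b := Nat.mul_le_mul_right _ hk2
            omega
        _ = B := hE2

end Stmt6Aux

/-- Contribution of a 2-dimensional cone Δ (generated by linearly independent
v₁ = (p₁,q₁), v₂ = (p₂,q₂) ∈ ℕ²) to the motivic zeta function, with u = 𝕃⁻¹
(variable 0 is u, variable 1 is T), stated with cleared denominators:
if F is the series whose coefficient at u^A T^B counts the lattice points (k₁,k₂)
in the interior of Δ with νk₁ + k₂ = A and k₁a + k₂b = B, and D_Δ is the series
whose coefficient at u^A T^B counts the points of the fundamental domain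
P_Δ = {μ₁v₁ + μ₂v₂ : 0 < μᵢ ≤ 1, μᵢ ∈ ℚ} ∩ ℤ² with the same exponents, then
(1 - u^{p₁ν+q₁} T^{N₁})(1 - u^{p₂ν+q₂} T^{N₂}) F = D_Δ,
where N₁ = p₁a + q₁b and N₂ = p₂a + q₂b. -/
theorem stmt_6 (p₁ q₁ p₂ q₂ a b ν : ℕ) (hν : 1 ≤ ν)
    (hindep : p₁ * q₂ ≠ p₂ * q₁)
    (hN₁ : 1 ≤ p₁ * a + q₁ * b) (hN₂ : 1 ≤ p₂ * a + q₂ * b)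
    (F D : MvPowerSeries (Fin 2) ℚ)
    (hF : ∀ e : Fin 2 →₀ ℕ, MvPowerSeries.coeff e F =
      ({k : ℕ × ℕ | (∃ μ₁ μ₂ : ℚ, 0 < μ₁ ∧ 0 < μ₂ ∧
          (k.1 : ℚ) = μ₁ * p₁ + μ₂ * p₂ ∧ (k.2 : ℚ) = μ₁ * q₁ + μ₂ * q₂) ∧
        ν * k.1 + k.2 = e 0 ∧ k.1 * a + k.2 * b = e 1} : Set (ℕ × ℕ)).ncard)
    (hD : ∀ e : Fin 2 →₀ ℕ, MvPowerSeries.coeff e D =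
      ({k : ℕ × ℕ | (∃ μ₁ μ₂ : ℚ, 0 < μ₁ ∧ μ₁ ≤ 1 ∧ 0 < μ₂ ∧ μ₂ ≤ 1 ∧
          (k.1 : ℚ) = μ₁ * p₁ + μ₂ * p₂ ∧ (k.2 : ℚ) = μ₁ * q₁ + μ₂ * q₂) ∧
        ν * k.1 + k.2 = e 0 ∧ k.1 * a + k.2 * b = e 1} : Set (ℕ × ℕ)).ncard) :
    (1 - MvPowerSeries.monomial (single (0 : Fin 2) (p₁ * ν + q₁) + single 1 (p₁ * a + q₁ * b)) 1) *
      (1 - MvPowerSeries.monomial (single (0 : Fin 2) (p₂ * ν + q₂) + single 1 (p₂ * a + q₂ * b)) 1) *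
      F = D := by
  classical
  set s : Fin 2 →₀ ℕ := single (0 : Fin 2) (p₁ * ν + q₁) + single 1 (p₁ * a + q₁ * b) with hs
  set t : Fin 2 →₀ ℕ := single (0 : Fin 2) (p₂ * ν + q₂) + single 1 (p₂ * a + q₂ * b) with ht
  have expand : (1 - monomial s 1) * (1 - monomial t 1) * F =
      F - monomial s 1 * F - monomial t 1 * F + monomial s 1 * monomial t 1 * F := by
    ring
  rw [expand]
  ext e
  rw [map_add, map_sub, map_sub]
  rw [monomial_mul_monomial, one_mul]
  rw [coeff_monomial_mul, coeff_monomial_mul, coeff_monomial_mul]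
  simp only [one_mul]
  -- component values of s and t
  have hs0 : s 0 = p₁ * ν + q₁ := by simp [hs, Finsupp.add_apply, Finsupp.single_apply]
  have hs1 : s 1 = p₁ * a + q₁ * b := by simp [hs, Finsupp.add_apply, Finsupp.single_apply]
  have ht0 : t 0 = p₂ * ν + q₂ := by simp [ht, Finsupp.add_apply, Finsupp.single_apply]
  have ht1 : t 1 = p₂ * a + q₂ * b := by simp [ht, Finsupp.add_apply, Finsupp.single_apply]
  have hle : ∀ u : Fin 2 →₀ ℕ, u ≤ e ↔ u 0 ≤ e 0 ∧ u 1 ≤ e 1 := by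
    intro u
    rw [Finsupp.le_def]
    constructor
    · intro h; exact ⟨h 0, h 1⟩
    · rintro ⟨h0, h1⟩ i; fin_cases i <;> assumption
  have hsub : ∀ (u : Fin 2 →₀ ℕ) (i : Fin 2), (e - u) i = e i - u i := by
    intro u i; simp
  -- abbreviations
  set m1 := mm₁ p₁ q₁ p₂ q₂ with hm1
  set m2 := mm₂ p₁ q₁ p₂ q₂ with hm2
  -- the sets
  set S₀ : Set (ℕ × ℕ) := {k | (0 < m1 k ∧ 0 < m2 k) ∧
    ν * k.1 + k.2 = e 0 ∧ k.1 * a + k.2 * b = e 1} with hS₀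
  set PP : Set (ℕ × ℕ) := {k | ((0 < m1 k ∧ m1 k ≤ 1) ∧ (0 < m2 k ∧ m2 k ≤ 1)) ∧
    ν * k.1 + k.2 = e 0 ∧ k.1 * a + k.2 * b = e 1} with hPP
  set B₁ : Set (ℕ × ℕ) := {k | (1 < m1 k ∧ 0 < m2 k) ∧
    ν * k.1 + k.2 = e 0 ∧ k.1 * a + k.2 * b = e 1} with hB₁
  set B₂ : Set (ℕ × ℕ) := {k | (0 < m1 k ∧ 1 < m2 k) ∧
    ν * k.1 + k.2 = e 0 ∧ k.1 * a + k.2 * b = e 1} with hB₂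
  set CC : Set (ℕ × ℕ) := {k | (1 < m1 k ∧ 1 < m2 k) ∧
    ν * k.1 + k.2 = e 0 ∧ k.1 * a + k.2 * b = e 1} with hCC
  -- finiteness
  have hfin : ∀ T : Set (ℕ × ℕ),
      (∀ k ∈ T, ν * k.1 + k.2 = e 0) → T.Finite := by
    intro T hT
    apply Set.Finite.subset (Set.finite_Iic ((e 0 : ℕ), (e 0 : ℕ)))
    intro k hk
    have := hT k hk
    constructor
    · show k.1 ≤ e 0
      have : k.1 ≤ ν * k.1 := Nat.le_mul_of_pos_left _ hν
      omega
    · show k.2 ≤ e 0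
      omega
  -- coefficient of D
  have hDe : coeff e D = (PP.ncard : ℚ) := by
    rw [hD e]
    congr 2
    ext k
    simp only [hPP, Set.mem_setOf_eq]
    rw [fund_iff hindep]
  -- coefficient of F at e
  have hFe : coeff e F = (S₀.ncard : ℚ) := by
    rw [hF e]
    congr 2
    ext k
    simp only [hS₀, Set.mem_setOf_eq]
    rw [int_iff hindep]
  -- coefficient of F at shifted exponents, via the shift lemma
  have hFs : (if s ≤ e then coeff (e - s) F else 0) = (B₁.ncard : ℚ) := by
    rw [hB₁, shift_ncard hindep a b ν (P := p₁) (Q := q₁) (c₁ := 1) (c₂ := 0)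
      (zero_le_one) (le_refl (0:ℚ))
      (by push_cast; ring) (by push_cast; ring) (e 0) (e 1)]
    simp only [show ν * p₁ + q₁ = p₁ * ν + q₁ from by ring, hle s, hs0, hs1]
    split_ifs with hcond
    · rw [hF (e - s)]
      rw [hsub s 0, hsub s 1, hs0, hs1]
      push_cast
      congr 2
      ext k
      simp only [Set.mem_setOf_eq]
      rw [int_iff hindep, ← hm1, ← hm2]
    · simp
  have hFt : (if t ≤ e then coeff (e - t) F else 0) = (B₂.ncard : ℚ) := by
    rw [hB₂, shift_ncard hindep a b ν (P := p₂) (Q := q₂) (c₁ := 0) (c₂ := 1)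
      (le_refl (0:ℚ)) (zero_le_one)
      (by push_cast; ring) (by push_cast; ring) (e 0) (e 1)]
    simp only [show ν * p₂ + q₂ = p₂ * ν + q₂ from by ring, hle t, ht0, ht1]
    split_ifs with hcond
    · rw [hF (e - t)]
      rw [hsub t 0, hsub t 1, ht0, ht1]
      push_cast
      congr 2
      ext k
      simp only [Set.mem_setOf_eq]
      rw [int_iff hindep, ← hm1, ← hm2]
    · simp
  have hFst : (if s + t ≤ e then coeff (e - (s + t)) F else 0) = (CC.ncard : ℚ) := by
    have hst0 : (s + t) 0 = ν * (p₁ + p₂) + (q₁ + q₂) := by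
      rw [Finsupp.add_apply, hs0, ht0]; ring
    have hst1 : (s + t) 1 = (p₁ + p₂) * a + (q₁ + q₂) * b := by
      rw [Finsupp.add_apply, hs1, ht1]; ring
    rw [hCC, shift_ncard hindep a b ν (P := p₁ + p₂) (Q := q₁ + q₂)
      (c₁ := 1) (c₂ := 1) (zero_le_one) (zero_le_one)
      (by push_cast; ring) (by push_cast; ring) (e 0) (e 1)]
    simp only [hle (s + t), hst0, hst1]
    split_ifs with hcond
    · rw [hF (e - (s + t))]
      rw [hsub (s + t) 0, hsub (s + t) 1, hst0, hst1]
      push_cast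
      congr 2
      ext k
      simp only [Set.mem_setOf_eq]
      rw [int_iff hindep, ← hm1, ← hm2]
    · simp
  -- inclusion-exclusion: S₀.ncard + CC.ncard = PP.ncard + B₁.ncard + B₂.ncard
  have hfinPP : PP.Finite := hfin PP (fun k hk => hk.2.1)
  have hfinB₁ : B₁.Finite := hfin B₁ (fun k hk => hk.2.1)
  have hfinB₂ : B₂.Finite := hfin B₂ (fun k hk => hk.2.1)
  have hUnion : B₁ ∪ B₂ ∪ PP = S₀ := by
    ext k
    simp only [hB₁, hB₂, hPP, hS₀, Set.mem_union, Set.mem_setOf_eq]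
    constructor
    · rintro ((⟨⟨h1, h2⟩, hE⟩ | ⟨⟨h1, h2⟩, hE⟩) | ⟨⟨⟨h1, _⟩, ⟨h2, _⟩⟩, hE⟩)
      · exact ⟨⟨by linarith, h2⟩, hE⟩
      · exact ⟨⟨h1, by linarith⟩, hE⟩
      · exact ⟨⟨h1, h2⟩, hE⟩
    · rintro ⟨⟨h1, h2⟩, hE⟩
      rcases le_or_gt (m1 k) 1 with hm₁' | hm₁'
      · rcases le_or_gt (m2 k) 1 with hm₂' | hm₂'
        · exact Or.inr ⟨⟨⟨h1, hm₁'⟩, ⟨h2, hm₂'⟩⟩, hE⟩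
        · exact Or.inl (Or.inr ⟨⟨h1, hm₂'⟩, hE⟩)
      · exact Or.inl (Or.inl ⟨⟨hm₁', h2⟩, hE⟩)
  have hInterB : B₁ ∩ B₂ = CC := by
    ext k
    simp only [hB₁, hB₂, hCC, Set.mem_inter_iff, Set.mem_setOf_eq]
    constructor
    · rintro ⟨⟨⟨h1, h2⟩, hE⟩, ⟨⟨h1', h2'⟩, _⟩⟩
      exact ⟨⟨h1, h2'⟩, hE⟩
    · rintro ⟨⟨h1, h2⟩, hE⟩
      exact ⟨⟨⟨h1, by linarith⟩, hE⟩, ⟨⟨by linarith, h2⟩, hE⟩⟩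
  have hInterP : (B₁ ∪ B₂) ∩ PP = ∅ := by
    rw [Set.eq_empty_iff_forall_notMem]
    rintro k ⟨hk1 | hk1, hk2⟩
    · exact absurd hk2.1.1.2 (not_le.mpr hk1.1.1)
    · exact absurd hk2.1.2.2 (not_le.mpr hk1.1.2)
  have hIE1 : (B₁ ∪ B₂).ncard + CC.ncard = B₁.ncard + B₂.ncard := by
    rw [← hInterB]
    exact Set.ncard_union_add_ncard_inter B₁ B₂ hfinB₁ hfinB₂
  have hIE2 : S₀.ncard + 0 = (B₁ ∪ B₂).ncard + PP.ncard := by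
    rw [← hUnion, ← Set.ncard_empty (ℕ × ℕ), ← hInterP]
    exact (Set.ncard_union_add_ncard_inter _ PP (hfinB₁.union hfinB₂) hfinPP)
  rw [hFe, hFs, hFt, hFst, hDe]
  have : (S₀.ncard : ℚ) + CC.ncard = PP.ncard + B₁.ncard + B₂.ncard := by
    have h1 : S₀.ncard + CC.ncard = PP.ncard + B₁.ncard + B₂.ncard := by omega
    exact_mod_cast h1
  linarith
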